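/- For every integer q > 2, the energy of the graph G_{q²} satisfies E(G_{q²}) ≤ 2q(q−1) + 2q² = 4q² − 2q. -/

import Mathlib

/-! ### Auxiliary spectral lemmas -/

open Matrix in
private lemma eig_congr {n : Type*} [Fintype n] [DecidableEq n] {A B : Matrix n n ℝ} (h : A = B)
    (hA : A.IsHermitian) (hB : B.IsHermitian) : hA.eigenvalues = hB.eigenvalues := by
  subst h; rfl

open Matrix in
private lemma spectral_real {n : Type*} [Fintype n] [DecidableEq n] {A : Matrix n n ℝ}
    (hA : A.IsHermitian) :
    A = (hA.eigenvectorUnitary : Matrix n n ℝ) * diagonal hA.eigenvalues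
      * (star (hA.eigenvectorUnitary : Matrix n n ℝ)) := by
  have := hA.spectral_theorem
  rwa [RCLike.ofReal_real_eq_id, Function.id_comp] at this

open Matrix Finset in
private lemma key_trace_bound {n : Type*} [Fintype n] [DecidableEq n] (A : Matrix n n ℝ)
    (hA : A.IsHermitian) (C : Matrix n n ℝ) (h2 : C * star C = 1)
    (ε : n → ℝ) (hε : ∀ i, |ε i| ≤ 1) :
    ∑ i, ε i * (star C * A * C) i i ≤ ∑ j, |hA.eigenvalues j| := by
  set U : Matrix n n ℝ := (hA.eigenvectorUnitary : Matrix n n ℝ) with hU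
  set W : Matrix n n ℝ := star U * C with hW
  have hUW : star U * U = 1 := Unitary.coe_star_mul_self hA.eigenvectorUnitary
  have hWW : W * star W = 1 := by
    rw [hW, StarMul.star_mul, star_star, mul_assoc, ← mul_assoc C, h2, one_mul, hUW]
  have hdec : star C * A * C = star W * diagonal hA.eigenvalues * W := by
    rw [hW, StarMul.star_mul, star_star]
    calc star C * A * C = star C * (U * diagonal hA.eigenvalues * star U) * C := by
            rw [← spectral_real hA]
      _ = star C * U * diagonal hA.eigenvalues * (star U * C) := by
            noncomm_ring
  have hdiag : ∀ i, (star C * A * C) i i = ∑ j, hA.eigenvalues j * (W j i)^2 := by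
    intro i
    rw [hdec, Matrix.mul_apply]
    have hleft : ∀ j, (star W * Matrix.diagonal hA.eigenvalues) i j
        = hA.eigenvalues j * W j i := by
      intro j
      rw [Matrix.mul_apply, Finset.sum_eq_single j]
      · rw [Matrix.diagonal_apply_eq, Matrix.star_apply]; simp [mul_comm]
      · intro k _ hk; rw [Matrix.diagonal_apply_ne _ hk, mul_zero]
      · intro h; exact absurd (Finset.mem_univ j) h
    simp_rw [hleft]
    congr 1; funext j; ring
  have hrow : ∀ j, ∑ i, (W j i)^2 = 1 := by
    intro j
    have := congrFun (congrFun hWW j) j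
    rw [Matrix.mul_apply] at this
    simpa [Matrix.star_apply, pow_two] using this
  calc ∑ i, ε i * (star C * A * C) i i
      = ∑ i, ∑ j, ε i * (hA.eigenvalues j * (W j i)^2) := by
        simp_rw [hdiag, Finset.mul_sum]
    _ = ∑ j, ∑ i, hA.eigenvalues j * (ε i * (W j i)^2) := by
        rw [Finset.sum_comm]; congr 1; funext j; congr 1; funext i; ring
    _ = ∑ j, hA.eigenvalues j * ∑ i, ε i * (W j i)^2 := by
        simp_rw [Finset.mul_sum]
    _ ≤ ∑ j, |hA.eigenvalues j| := by
        apply Finset.sum_le_sum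
        intro j _
        calc hA.eigenvalues j * ∑ i, ε i * (W j i)^2
            ≤ |hA.eigenvalues j * ∑ i, ε i * (W j i)^2| := le_abs_self _
          _ = |hA.eigenvalues j| * |∑ i, ε i * (W j i)^2| := abs_mul _ _
          _ ≤ |hA.eigenvalues j| * 1 := by
              apply mul_le_mul_of_nonneg_left _ (abs_nonneg _)
              calc |∑ i, ε i * (W j i)^2| ≤ ∑ i, |ε i * (W j i)^2| :=
                    Finset.abs_sum_le_sum_abs _ _
                _ ≤ ∑ i, (W j i)^2 := by
                    apply Finset.sum_le_sum
                    intro i _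
                    rw [abs_mul, abs_pow, sq_abs]
                    calc |ε i| * (W j i)^2 ≤ 1 * (W j i)^2 :=
                          mul_le_mul_of_nonneg_right (hε i) (sq_nonneg _)
                      _ = (W j i)^2 := one_mul _
                _ = 1 := hrow j
          _ = |hA.eigenvalues j| := mul_one _

open Matrix Finset in
private lemma energy_subadd {n : Type*} [Fintype n] [DecidableEq n] {A B : Matrix n n ℝ}
    (hA : A.IsHermitian) (hB : B.IsHermitian) (hC : (A + B).IsHermitian) :
    ∑ i, |hC.eigenvalues i| ≤ ∑ i, |hA.eigenvalues i| + ∑ i, |hB.eigenvalues i| := by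
  set C : Matrix n n ℝ := (hC.eigenvectorUnitary : Matrix n n ℝ) with hCdef
  have h1 : star C * C = 1 := Unitary.coe_star_mul_self hC.eigenvectorUnitary
  have h2 : C * star C = 1 := Unitary.coe_mul_star_self hC.eigenvectorUnitary
  set ε : n → ℝ := fun i => if hC.eigenvalues i < 0 then -1 else 1 with hε
  have hε1 : ∀ i, |ε i| ≤ 1 := by intro i; rw [hε]; dsimp only; split <;> simp
  have hdiag : star C * (A + B) * C = Matrix.diagonal hC.eigenvalues := by
    calc star C * (A + B) * C
        = star C * ((hC.eigenvectorUnitary : Matrix n n ℝ) * Matrix.diagonal hC.eigenvalues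
            * star (hC.eigenvectorUnitary : Matrix n n ℝ)) * C := by rw [← spectral_real hC]
      _ = (star C * C) * Matrix.diagonal hC.eigenvalues * (star C * C) := by
          rw [hCdef]; noncomm_ring
      _ = Matrix.diagonal hC.eigenvalues := by rw [h1, one_mul, mul_one]
  have habs : ∀ i, |hC.eigenvalues i| = ε i * (star C * (A + B) * C) i i := by
    intro i
    rw [hdiag, Matrix.diagonal_apply_eq, hε]
    dsimp only
    split <;> rename_i h
    · rw [abs_of_neg h]; ring
    · rw [abs_of_nonneg (not_lt.mp h), one_mul]
  calc ∑ i, |hC.eigenvalues i| = ∑ i, ε i * (star C * (A + B) * C) i i := by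
        simp_rw [habs]
    _ = ∑ i, (ε i * (star C * A * C) i i + ε i * (star C * B * C) i i) := by
        congr 1; funext i
        have : star C * (A + B) * C = star C * A * C + star C * B * C := by noncomm_ring
        rw [this, Matrix.add_apply, mul_add]
    _ = ∑ i, ε i * (star C * A * C) i i + ∑ i, ε i * (star C * B * C) i i :=
        Finset.sum_add_distrib
    _ ≤ _ := add_le_add (key_trace_bound A hA C h2 ε hε1) (key_trace_bound B hB C h2 ε hε1)

open Matrix in
private lemma sum_eigenvalues_eq_trace {n : Type*} [Fintype n] [DecidableEq n]
    {A : Matrix n n ℝ} (hA : A.IsHermitian) : ∑ i, hA.eigenvalues i = A.trace := by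
  have h1 : star (hA.eigenvectorUnitary : Matrix n n ℝ) * hA.eigenvectorUnitary = 1 :=
    Unitary.coe_star_mul_self hA.eigenvectorUnitary
  calc ∑ i, hA.eigenvalues i = (Matrix.diagonal hA.eigenvalues).trace := by
        rw [Matrix.trace_diagonal]
    _ = A.trace := by
        conv_rhs => rw [spectral_real hA]
        rw [Matrix.trace_mul_cycle, h1, one_mul]

private lemma eigenvector_exists {n : Type*} [Fintype n] [DecidableEq n] {A : Matrix n n ℝ}
    (hA : A.IsHermitian) (i : n) : ∃ a, (hA.eigenvectorBasis i) a ≠ 0 := by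
  by_contra h
  push_neg at h
  have hnorm : ‖hA.eigenvectorBasis i‖ = 1 := hA.eigenvectorBasis.orthonormal.1 i
  rw [EuclideanSpace.norm_eq] at hnorm
  simp only [h, norm_zero] at hnorm
  norm_num at hnorm

/-! ### The two matrices -/

/-- `q` disjoint copies of `K_q`. -/
private def mA1 (q : ℕ) : Matrix (Fin q × Fin q) (Fin q × Fin q) ℝ :=
  Matrix.of fun a b => if a.1 = b.1 ∧ a.2 ≠ b.2 then 1 else 0

/-- `q` disjoint `q`-cycles. -/
private def mA2 (q : ℕ) : Matrix (Fin q × Fin q) (Fin q × Fin q) ℝ :=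
  Matrix.of fun a b => if a.2 = b.2 ∧
    ((b.1 : ℕ) = ((a.1 : ℕ) + 1) % q ∨ (a.1 : ℕ) = ((b.1 : ℕ) + 1) % q) then 1 else 0

private lemma mod_succ (q x : ℕ) (hx : x < q) :
    (x + 1) % q = if x + 1 = q then 0 else x + 1 := by
  split <;> rename_i h
  · rw [h, Nat.mod_self]
  · exact Nat.mod_eq_of_lt (by omega)

private lemma mod_pred (q x : ℕ) (hx : x < q) (hq : 0 < q) :
    (x + q - 1) % q = if x = 0 then q - 1 else x - 1 := by
  split <;> rename_i h
  · subst h; rw [Nat.zero_add]; exact Nat.mod_eq_of_lt (by omega)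
  · have e : x + q - 1 = (x - 1) + q := by omega
    rw [e, Nat.add_mod_right]
    exact Nat.mod_eq_of_lt (by omega)

private lemma mA1_herm (q : ℕ) : (mA1 q).IsHermitian := by
  rw [Matrix.IsHermitian]
  ext a b
  simp only [Matrix.conjTranspose_apply, mA1, Matrix.of_apply, star_trivial]
  refine if_congr ?_ rfl rfl
  constructor
  · rintro ⟨h1, h2⟩; exact ⟨h1.symm, fun h => h2 h.symm⟩
  · rintro ⟨h1, h2⟩; exact ⟨h1.symm, fun h => h2 h.symm⟩

private lemma mA2_herm (q : ℕ) : (mA2 q).IsHermitian := by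
  rw [Matrix.IsHermitian]
  ext a b
  simp only [Matrix.conjTranspose_apply, mA2, Matrix.of_apply, star_trivial]
  refine if_congr ?_ rfl rfl
  constructor
  · rintro ⟨h1, h2⟩; exact ⟨h1.symm, h2.symm⟩
  · rintro ⟨h1, h2⟩; exact ⟨h1.symm, h2.symm⟩

open Finset in
private lemma sum_ite_eq_both {q : ℕ} (x y : Fin q) :
    ∑ c : Fin q, (if c = x ∧ c = y then (1:ℝ) else 0) = if x = y then 1 else 0 := by
  split <;> rename_i h
  · subst h
    simp
  · apply Finset.sum_eq_zero
    rintro c -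
    rw [if_neg]
    rintro ⟨rfl, rfl⟩
    exact h rfl

open Finset in
private lemma sum_ite_ne_ne {q : ℕ} (x y : Fin q) :
    ∑ c : Fin q, (if c ≠ x ∧ c ≠ y then (1:ℝ) else 0)
      = (q : ℝ) - 1 - 1 + (if x = y then 1 else 0) := by
  have key : ∀ c : Fin q, (if c ≠ x ∧ c ≠ y then (1:ℝ) else 0)
      = 1 - (if c = x then 1 else 0) - (if c = y then 1 else 0)
        + (if c = x ∧ c = y then 1 else 0) := by
    intro c
    by_cases h1 : c = x <;> by_cases h2 : c = y <;> simp [h1, h2]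
  rw [Finset.sum_congr rfl (fun c _ => key c)]
  rw [Finset.sum_add_distrib, Finset.sum_sub_distrib, Finset.sum_sub_distrib]
  rw [Finset.sum_const, Finset.sum_ite_eq' Finset.univ x (fun _ => (1:ℝ)),
    Finset.sum_ite_eq' Finset.univ y (fun _ => (1:ℝ)), sum_ite_eq_both]
  simp [Finset.card_univ]

open Finset in
private lemma mA1_sq (q : ℕ) :
    mA1 q * mA1 q = ((q : ℝ) - 2) • mA1 q + ((q : ℝ) - 1) • 1 := by
  ext a b
  rw [Matrix.mul_apply]
  have expand : ∀ c : Fin q × Fin q, mA1 q a c * mA1 q c b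
      = (if c.1 = a.1 ∧ c.1 = b.1 then (1:ℝ) else 0)
        * (if c.2 ≠ a.2 ∧ c.2 ≠ b.2 then 1 else 0) := by
    rintro ⟨c1, c2⟩
    simp only [mA1, Matrix.of_apply, ite_zero_mul_ite_zero, one_mul]
    refine if_congr ?_ rfl rfl
    constructor
    · rintro ⟨⟨u1, u2⟩, v1, v2⟩ ; exact ⟨⟨u1.symm, v1⟩, fun h => u2 h.symm, v2⟩
    · rintro ⟨⟨u1, v1⟩, u2, v2⟩ ; exact ⟨⟨u1.symm, fun h => u2 h.symm⟩, v1, v2⟩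
  rw [Finset.sum_congr rfl (fun c _ => expand c), ← Finset.univ_product_univ,
    Finset.sum_product]
  dsimp only
  rw [← Finset.sum_mul_sum (f := fun x : Fin q => if x = a.1 ∧ x = b.1 then (1:ℝ) else 0)
    (g := fun y : Fin q => if y ≠ a.2 ∧ y ≠ b.2 then (1:ℝ) else 0)]
  rw [sum_ite_eq_both, sum_ite_ne_ne]
  simp only [Matrix.add_apply, Matrix.smul_apply, Matrix.one_apply, mA1, Matrix.of_apply,
    smul_eq_mul, Prod.ext_iff]
  by_cases h1 : a.1 = b.1 <;> by_cases h2 : a.2 = b.2 <;>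
    simp [h1, h2] <;> ring

open Finset in
private lemma mA2_rowsum (q : ℕ) (hq : 2 < q) (a : Fin q × Fin q) :
    ∑ b, mA2 q a b = 2 := by
  have hq0 : 0 < q := by omega
  set s : Fin q := ⟨((a.1 : ℕ) + 1) % q, Nat.mod_lt _ hq0⟩ with hs
  set p : Fin q := ⟨((a.1 : ℕ) + q - 1) % q, Nat.mod_lt _ hq0⟩ with hp
  have hsp : s ≠ p := by
    rw [hs, hp, Fin.ne_iff_vne]
    dsimp only
    rw [mod_succ q _ a.1.isLt, mod_pred q _ a.1.isLt hq0]
    have := a.1.isLt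
    split_ifs <;> omega
  have hiff : ∀ b1 : Fin q,
      ((b1 : ℕ) = ((a.1 : ℕ) + 1) % q ∨ (a.1 : ℕ) = ((b1 : ℕ) + 1) % q)
        ↔ (b1 = s ∨ b1 = p) := by
    intro b1
    have h1 := a.1.isLt
    have h2 := b1.isLt
    rw [Fin.ext_iff, Fin.ext_iff, hs, hp]
    dsimp only
    rw [mod_succ q _ h1, mod_succ q _ h2, mod_pred q _ h1 hq0]
    split_ifs <;> omega
  have expand : ∀ b : Fin q × Fin q, mA2 q a b
      = (if b.1 = s ∨ b.1 = p then (1:ℝ) else 0) * (if b.2 = a.2 then 1 else 0) := by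
    rintro ⟨b1, b2⟩
    simp only [mA2, Matrix.of_apply, ite_zero_mul_ite_zero, one_mul]
    refine if_congr ?_ rfl rfl
    rw [← hiff b1]
    constructor
    · rintro ⟨u, v⟩; exact ⟨v, u.symm⟩
    · rintro ⟨u, v⟩; exact ⟨v.symm, u⟩
  rw [Finset.sum_congr rfl (fun b _ => expand b), ← Finset.univ_product_univ,
    Finset.sum_product]
  dsimp only
  rw [← Finset.sum_mul_sum (f := fun x : Fin q => if x = s ∨ x = p then (1:ℝ) else 0)
    (g := fun y : Fin q => if y = a.2 then (1:ℝ) else 0)]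
  have e1 : ∑ b1 : Fin q, (if b1 = s ∨ b1 = p then (1:ℝ) else 0) = 2 := by
    have key : ∀ b1 : Fin q, (if b1 = s ∨ b1 = p then (1:ℝ) else 0)
        = (if b1 = s then 1 else 0) + (if b1 = p then 1 else 0) := by
      intro b1
      by_cases h1 : b1 = s <;> by_cases h2 : b1 = p <;>
        simp [h1, h2, hsp, Ne.symm hsp]
    rw [Finset.sum_congr rfl (fun b _ => key b), Finset.sum_add_distrib,
      Finset.sum_ite_eq' Finset.univ s (fun _ => (1:ℝ)),
      Finset.sum_ite_eq' Finset.univ p (fun _ => (1:ℝ))]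
    simp; norm_num
  have e2 : ∑ b2 : Fin q, (if b2 = a.2 then (1:ℝ) else 0) = 1 := by
    rw [Finset.sum_ite_eq' Finset.univ a.2 (fun _ => (1:ℝ))]; simp
  rw [e1, e2]; norm_num

private lemma mA1_trace (q : ℕ) : (mA1 q).trace = 0 := by
  rw [Matrix.trace]
  apply Finset.sum_eq_zero
  intro a _
  simp [Matrix.diag, mA1]

open Matrix in
private lemma eig_mA1 (q : ℕ) (i : Fin q × Fin q) :
    (mA1_herm q).eigenvalues i = -1 ∨ (mA1_herm q).eigenvalues i = (q : ℝ) - 1 := by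
  set lam := (mA1_herm q).eigenvalues i with hlam
  have hv := (mA1_herm q).mulVec_eigenvectorBasis i
  have hv2 : (mA1 q * mA1 q) *ᵥ ⇑((mA1_herm q).eigenvectorBasis i)
      = (lam ^ 2) • ⇑((mA1_herm q).eigenvectorBasis i) := by
    rw [← Matrix.mulVec_mulVec, hv, Matrix.mulVec_smul, hv, smul_smul, ← pow_two]
  rw [mA1_sq q, Matrix.add_mulVec, Matrix.smul_mulVec, Matrix.smul_mulVec,
    hv, Matrix.one_mulVec, smul_smul] at hv2
  obtain ⟨a, ha⟩ := eigenvector_exists (mA1_herm q) i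
  have happ := congrFun hv2 a
  simp only [Pi.add_apply, Pi.smul_apply, smul_eq_mul] at happ
  have h2 : (((q : ℝ) - 2) * lam + ((q : ℝ) - 1)) * ((mA1_herm q).eigenvectorBasis i) a
      = lam ^ 2 * ((mA1_herm q).eigenvectorBasis i) a := by linear_combination happ
  have hquad : ((q : ℝ) - 2) * lam + ((q : ℝ) - 1) = lam ^ 2 := mul_right_cancel₀ ha h2
  have hfact : (lam + 1) * (lam - ((q : ℝ) - 1)) = 0 := by linear_combination -hquad
  rcases mul_eq_zero.mp hfact with h | h
  · exact Or.inl (by linarith)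
  · exact Or.inr (by linarith)

open Matrix Finset in
private lemma eig_mA2 (q : ℕ) (hq : 2 < q) (i : Fin q × Fin q) :
    |(mA2_herm q).eigenvalues i| ≤ 2 := by
  set lam := (mA2_herm q).eigenvalues i with hlam
  have hv := (mA2_herm q).mulVec_eigenvectorBasis i
  set v : (Fin q × Fin q) → ℝ := ⇑((mA2_herm q).eigenvectorBasis i) with hvdef
  obtain ⟨a, -, hmax⟩ := Finset.exists_max_image Finset.univ (fun b => |v b|)
    ⟨i, Finset.mem_univ i⟩
  have hva : 0 < |v a| := by
    obtain ⟨c, hc⟩ := eigenvector_exists (mA2_herm q) i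
    have : (0:ℝ) < |v c| := abs_pos.mpr hc
    exact lt_of_lt_of_le this (hmax c (Finset.mem_univ c))
  have happ : lam * v a = ∑ b, mA2 q a b * v b := by
    have := congrFun hv a
    simp only [Pi.smul_apply, smul_eq_mul] at this
    rw [← this]
    rw [Matrix.mulVec, dotProduct]
  have hnonneg : ∀ a b, (0:ℝ) ≤ mA2 q a b := by
    intro a b; rw [mA2, Matrix.of_apply]; split <;> norm_num
  have hbound : |lam| * |v a| ≤ 2 * |v a| := by
    calc |lam| * |v a| = |lam * v a| := (abs_mul _ _).symm
      _ = |∑ b, mA2 q a b * v b| := by rw [happ]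
      _ ≤ ∑ b, |mA2 q a b * v b| := Finset.abs_sum_le_sum_abs _ _
      _ ≤ ∑ b, mA2 q a b * |v a| := by
          apply Finset.sum_le_sum
          intro b _
          rw [abs_mul, abs_of_nonneg (hnonneg a b)]
          exact mul_le_mul_of_nonneg_left (hmax b (Finset.mem_univ b)) (hnonneg a b)
      _ = (∑ b, mA2 q a b) * |v a| := by rw [Finset.sum_mul]
      _ = 2 * |v a| := by rw [mA2_rowsum q hq a]
  exact le_of_mul_le_mul_right hbound hva

/-! ### The statement -/

/-- The adjacency matrix of a simple graph over `ℝ` is Hermitian. -/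
theorem SimpleGraph.adjMatrix_isHermitian {V : Type*} [Fintype V] (G : SimpleGraph V)
    [DecidableRel G.Adj] : (G.adjMatrix ℝ).IsHermitian := by
  rw [Matrix.IsHermitian, Matrix.conjTranspose_eq_transpose_of_trivial]
  exact SimpleGraph.isSymm_adjMatrix G

/-- The eigenvalues of the (real, symmetric) adjacency matrix of a simple graph,
indexed by the vertex set (listed with multiplicity). -/
noncomputable def SimpleGraph.adjEigenvalues {V : Type*} [Fintype V] [DecidableEq V]
    (G : SimpleGraph V) : V → ℝ :=
  letI := Classical.decRel G.Adj
  (G.adjMatrix_isHermitian).eigenvalues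

/-- The energy of a simple graph: the sum of the absolute values of the
eigenvalues of its adjacency matrix. -/
noncomputable def SimpleGraph.energy {V : Type*} [Fintype V] [DecidableEq V]
    (G : SimpleGraph V) : ℝ :=
  ∑ v, |G.adjEigenvalues v|

/-- The graph `G_{q²}` : `q` disjoint copies of the complete graph `K_q`
(the copies indexed by the first coordinate, a residue `i` mod `q`), together
with, for each label `j`, the edges of a `q`-cycle joining `v_j[i]` and
`v_j[i ± 1 mod q]`.  Thus `(i, j)` is adjacent to `(i', j')` iff
(`i = i'` and `j ≠ j'`) or (`j = j'` and `i' = i ± 1 (mod q)`). -/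
def gGraph (q : ℕ) : SimpleGraph (Fin q × Fin q) :=
  SimpleGraph.fromRel fun a b =>
    (a.1 = b.1 ∧ a.2 ≠ b.2) ∨ (a.2 = b.2 ∧ (b.1 : ℕ) = ((a.1 : ℕ) + 1) % q)

instance gGraph.instDecidableRelAdj (q : ℕ) : DecidableRel (gGraph q).Adj := fun a b =>
  decidable_of_iff _ (SimpleGraph.fromRel_adj _ a b).symm

private lemma succ_mod_ne (q x : ℕ) (hq : 2 < q) (hx : x < q) : (x + 1) % q ≠ x := by
  rw [mod_succ q x hx]; split <;> omega

private lemma adj_decomp (q : ℕ) (hq : 2 < q) (inst : DecidableRel (gGraph q).Adj) :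
    (@SimpleGraph.adjMatrix ℝ (Fin q × Fin q) (gGraph q) inst _ _) = mA1 q + mA2 q := by
  ext a b
  rw [SimpleGraph.adjMatrix_apply, Matrix.add_apply]
  have hAdj : (gGraph q).Adj a b ↔
      ((a.1 = b.1 ∧ a.2 ≠ b.2) ∨ (a.2 = b.2 ∧
        ((b.1 : ℕ) = ((a.1 : ℕ) + 1) % q ∨ (a.1 : ℕ) = ((b.1 : ℕ) + 1) % q))) := by
    rw [gGraph, SimpleGraph.fromRel_adj]
    constructor
    · rintro ⟨hne, (⟨h1, h2⟩ | ⟨h2, h1⟩) | (⟨h1, h2⟩ | ⟨h2, h1⟩)⟩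
      · exact Or.inl ⟨h1, h2⟩
      · exact Or.inr ⟨h2, Or.inl h1⟩
      · exact Or.inl ⟨h1.symm, fun h => h2 h.symm⟩
      · exact Or.inr ⟨h2.symm, Or.inr h1⟩
    · rintro (⟨h1, h2⟩ | ⟨h2, h1 | h1⟩)
      · exact ⟨fun h => h2 (congrArg Prod.snd h), Or.inl (Or.inl ⟨h1, h2⟩)⟩
      · refine ⟨fun h => ?_, Or.inl (Or.inr ⟨h2, h1⟩)⟩
        rw [h] at h1
        exact succ_mod_ne q b.1 hq b.1.isLt h1.symm
      · refine ⟨fun h => ?_, Or.inr (Or.inr ⟨h2.symm, h1⟩)⟩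
        rw [h] at h1
        exact succ_mod_ne q b.1 hq b.1.isLt h1.symm
  by_cases hc1 : a.1 = b.1 ∧ a.2 ≠ b.2 <;>
    by_cases hc2 : a.2 = b.2 ∧
      ((b.1 : ℕ) = ((a.1 : ℕ) + 1) % q ∨ (a.1 : ℕ) = ((b.1 : ℕ) + 1) % q)
  · exact absurd hc2.1 hc1.2
  · simp [mA1, mA2, hAdj, hc1, hc2]
  · simp [mA1, mA2, hAdj, hc1, hc2]
  · simp [mA1, mA2, hAdj, hc1, hc2]

open Finset in
private lemma energy_mA1 (q : ℕ) (hq : 2 < q) :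
    ∑ i, |(mA1_herm q).eigenvalues i| = 2 * (q : ℝ) * ((q : ℝ) - 1) := by
  have hq0 : (0:ℝ) < (q:ℝ) := by positivity
  have hpt : ∀ i, |(mA1_herm q).eigenvalues i|
      = ((q : ℝ) - 2)/(q : ℝ) * (mA1_herm q).eigenvalues i + (2*(q:ℝ) - 2)/(q:ℝ) := by
    intro i
    rcases eig_mA1 q i with h | h <;> rw [h]
    · rw [abs_of_nonpos (by norm_num)]
      field_simp
      ring
    · have h3 : (3:ℝ) ≤ (q:ℝ) := by exact_mod_cast hq
      rw [abs_of_nonneg (by linarith)]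
      field_simp
      ring
  rw [Finset.sum_congr rfl (fun i _ => hpt i), Finset.sum_add_distrib, ← Finset.mul_sum,
    sum_eigenvalues_eq_trace, mA1_trace, Finset.sum_const, Finset.card_univ]
  have hcard : (Fintype.card (Fin q × Fin q) : ℝ) = (q : ℝ) * (q : ℝ) := by
    rw [Fintype.card_prod, Fintype.card_fin]
    push_cast
    ring
  rw [nsmul_eq_mul, hcard, mul_zero]
  field_simp
  ring

/-- For every integer `q > 2`, the energy of `G_{q²}` satisfies
`E(G_{q²}) ≤ 2q(q-1) + 2q² = 4q² - 2q`. -/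
theorem energy_gGraph_le (q : ℕ) (hq : 2 < q) :
    (gGraph q).energy ≤ 2 * (q : ℝ) * ((q : ℝ) - 1) + 2 * (q : ℝ) ^ 2 ∧
    2 * (q : ℝ) * ((q : ℝ) - 1) + 2 * (q : ℝ) ^ 2 = 4 * (q : ℝ) ^ 2 - 2 * (q : ℝ) := by
  constructor
  · have hAB : (mA1 q + mA2 q).IsHermitian := (mA1_herm q).add (mA2_herm q)
    have e2 : (gGraph q).adjEigenvalues = hAB.eigenvalues := by
      unfold SimpleGraph.adjEigenvalues
      exact eig_congr (adj_decomp q hq _) _ _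
    have e1 : (gGraph q).energy = ∑ i, |hAB.eigenvalues i| := by
      unfold SimpleGraph.energy
      rw [e2]
    rw [e1]
    calc ∑ i, |hAB.eigenvalues i|
        ≤ ∑ i, |(mA1_herm q).eigenvalues i| + ∑ i, |(mA2_herm q).eigenvalues i| :=
          energy_subadd (mA1_herm q) (mA2_herm q) hAB
      _ ≤ 2 * (q : ℝ) * ((q : ℝ) - 1) + 2 * (q : ℝ) ^ 2 := by
          apply add_le_add
          · rw [energy_mA1 q hq]
          · calc ∑ i : Fin q × Fin q, |(mA2_herm q).eigenvalues i|
                ≤ ∑ _i : Fin q × Fin q, (2:ℝ) :=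
                  Finset.sum_le_sum (fun i _ => eig_mA2 q hq i)
              _ = 2 * (q : ℝ) ^ 2 := by
                  rw [Finset.sum_const, Finset.card_univ, nsmul_eq_mul, Fintype.card_prod,
                    Fintype.card_fin]
                  push_cast
                  ring
  · ring
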